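/- arXiv:1303.1085 — 3 statements merged into one kernel-verified Lean document; each statement's English description precedes it below -/
import Mathlib

section
/- For every integer R ≥ 1, π − ‖T_R‖ equals the infimum, over all vectors u ∈ ℂ^R with Σ_{n=1}^R |u_n|² = 1, of ∫_0^{2π} x |φ_u(x)|² dx, where φ_u(x) = (1/√(2π)) Σ_{n=1}^R u_n exp(i(n−1)x). -/
/-- The `R × R` Hilbert matrix `T_R`, with entries `1/(m - n)` for `m ≠ n`
and `0` on the diagonal. -/
noncomputable def Tmat (R : ℕ) : Matrix (Fin R) (Fin R) ℝ :=
  Matrix.of fun m n => if m = n then 0 else 1 / ((m : ℝ) - (n : ℝ))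

/-- The spectral norm of a real matrix: the operator norm induced by the
Euclidean norm. -/
noncomputable def specNorm {R : ℕ} (M : Matrix (Fin R) (Fin R) ℝ) : ℝ :=
  ‖Matrix.toEuclideanCLM (𝕜 := ℝ) M‖

/-- The trigonometric polynomial `φ_u(x) = (2π)^{-1/2} Σ_{n=1}^R u_n e^{i(n-1)x}`
associated with `u ∈ ℂ^R` (here `n : Fin R` plays the role of `n - 1`). -/
noncomputable def phi {R : ℕ} (u : Fin R → ℂ) (t : ℝ) : ℂ :=
  ((Real.sqrt (2 * Real.pi) : ℝ) : ℂ)⁻¹ *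
    ∑ n : Fin R, u n * Complex.exp (Complex.I * ((n : ℕ) : ℂ) * (t : ℂ))

noncomputable def qform {R : ℕ} (u : Fin R → ℂ) : ℝ :=
  ∑ m : Fin R, ∑ n : Fin R,
    ((u m).im * (u n).re - (u m).re * (u n).im) * Tmat R m n


open Complex in
lemma phi_mul_conj {R : ℕ} (u : Fin R → ℂ) (t : ℝ) :
    (t:ℂ) * (phi u t * (starRingEnd ℂ) (phi u t)) =
      ((2*Real.pi : ℝ) : ℂ)⁻¹ * ∑ m : Fin R, ∑ n : Fin R,
        (u m * (starRingEnd ℂ) (u n)) *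
          ((t:ℂ) * Complex.exp (Complex.I * ((((m:ℕ):ℤ) - ((n:ℕ):ℤ) : ℤ) : ℂ) * t)) := by
  unfold phi
  set A : ℂ := ((Real.sqrt (2 * Real.pi) : ℝ) : ℂ)⁻¹ with hA
  have hsq : A * (starRingEnd ℂ) A = ((2*Real.pi : ℝ) : ℂ)⁻¹ := by
    rw [hA, ← Complex.ofReal_inv, Complex.conj_ofReal, ← Complex.ofReal_mul, ← mul_inv,
      Real.mul_self_sqrt (by positivity), Complex.ofReal_inv]
  have hconj : (starRingEnd ℂ) (∑ n : Fin R, u n * Complex.exp (Complex.I * ((n : ℕ) : ℂ) * (t : ℂ)))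
      = ∑ n : Fin R, (starRingEnd ℂ) (u n) * Complex.exp (-(Complex.I * ((n : ℕ) : ℂ) * (t : ℂ))) := by
    rw [map_sum]
    refine Finset.sum_congr rfl fun n _ => ?_
    rw [map_mul, ← Complex.exp_conj]
    congr 2
    simp [Complex.conj_I]
  rw [map_mul, hconj]
  have hprod : (∑ m : Fin R, u m * Complex.exp (Complex.I * ((m : ℕ) : ℂ) * (t : ℂ))) *
      (∑ n : Fin R, (starRingEnd ℂ) (u n) * Complex.exp (-(Complex.I * ((n : ℕ) : ℂ) * (t : ℂ))))
      = ∑ m : Fin R, ∑ n : Fin R, (u m * (starRingEnd ℂ) (u n)) *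
          Complex.exp (Complex.I * ((((m:ℕ):ℤ) - ((n:ℕ):ℤ) : ℤ) : ℂ) * t) := by
    rw [Finset.sum_mul_sum]
    refine Finset.sum_congr rfl fun m _ => Finset.sum_congr rfl fun n _ => ?_
    rw [mul_mul_mul_comm, ← Complex.exp_add]
    congr 2
    push_cast
    ring
  calc (t:ℂ) * (A * (∑ m : Fin R, u m * Complex.exp (Complex.I * ((m : ℕ) : ℂ) * (t : ℂ))) *
        ((starRingEnd ℂ) A * ∑ n : Fin R, (starRingEnd ℂ) (u n) * Complex.exp (-(Complex.I * ((n : ℕ) : ℂ) * (t : ℂ)))))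
      = (A * (starRingEnd ℂ) A) * ((t:ℂ) * ((∑ m : Fin R, u m * Complex.exp (Complex.I * ((m : ℕ) : ℂ) * (t : ℂ))) *
        (∑ n : Fin R, (starRingEnd ℂ) (u n) * Complex.exp (-(Complex.I * ((n : ℕ) : ℂ) * (t : ℂ)))))) := by ring
    _ = ((2*Real.pi : ℝ) : ℂ)⁻¹ * ((t:ℂ) * ∑ m : Fin R, ∑ n : Fin R, (u m * (starRingEnd ℂ) (u n)) *
          Complex.exp (Complex.I * ((((m:ℕ):ℤ) - ((n:ℕ):ℤ) : ℤ) : ℂ) * t)) := by rw [hsq, hprod]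
    _ = _ := by
        congr 1
        rw [Finset.mul_sum]
        refine Finset.sum_congr rfl fun m _ => ?_
        rw [Finset.mul_sum]
        refine Finset.sum_congr rfl fun n _ => ?_
        ring


open Complex intervalIntegral in
lemma Jint_ne (k : ℤ) (hk : k ≠ 0) :
    ∫ t in (0:ℝ)..(2*Real.pi), (t:ℂ) * Complex.exp (Complex.I * k * t)
      = -2 * Real.pi * Complex.I / k := by
  set c : ℂ := Complex.I * k with hc
  have hc0 : c ≠ 0 := by
    simp [hc, Complex.I_ne_zero, hk]
  have hderiv : ∀ t : ℝ, HasDerivAt (fun s : ℝ => ((s:ℂ)/c - (c^2)⁻¹) * Complex.exp (c * s))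
      ((t:ℂ) * Complex.exp (c * t)) t := by
    intro t
    have h1 : HasDerivAt (fun s : ℝ => (s:ℂ)) 1 t := Complex.ofRealCLM.hasDerivAt
    have h2 : HasDerivAt (fun s : ℝ => (s:ℂ)/c - (c^2)⁻¹) (1/c) t := by
      simpa using (h1.div_const c).sub_const ((c^2)⁻¹)
    have h3 : HasDerivAt (fun s : ℝ => Complex.exp (c * s)) (Complex.exp (c * t) * c) t := by
      have := ((h1.const_mul c).cexp)
      simpa using this
    have := h2.mul h3
    convert this using 1
    · rfl
    case e'_8 => rfl
    field_simp
    ring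
  have hint : IntervalIntegrable (fun t : ℝ => (t:ℂ) * Complex.exp (c * t)) MeasureTheory.volume 0 (2*Real.pi) := by
    apply Continuous.intervalIntegrable
    fun_prop
  have := intervalIntegral.integral_eq_sub_of_hasDerivAt (fun t _ => hderiv t) hint
  have hexp : Complex.exp (c * (2*Real.pi)) = 1 := by
    have : c * (2*Real.pi) = k * (2 * Real.pi * Complex.I) := by push_cast [hc]; ring
    rw [this, Complex.exp_int_mul_two_pi_mul_I]
  have hcalc : (∫ t in (0:ℝ)..(2*Real.pi), (t:ℂ) * Complex.exp (c * t)) = 2 * Real.pi / c := by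
    rw [this]
    push_cast
    rw [hexp]
    field_simp
    rw [mul_zero, Complex.exp_zero]
    ring
  rw [show (fun t : ℝ => (t:ℂ) * Complex.exp (Complex.I * k * t)) = fun t : ℝ => (t:ℂ) * Complex.exp (c * t) from rfl] at *
  rw [hcalc, hc]
  have hk' : (k:ℂ) ≠ 0 := Int.cast_ne_zero.mpr hk
  field_simp [Complex.I_ne_zero]
  ring_nf
  simp [Complex.I_sq]


open Complex intervalIntegral in
lemma Jint_zero :
    ∫ t in (0:ℝ)..(2*Real.pi), (t:ℂ) * Complex.exp (Complex.I * (0:ℤ) * t)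
      = ((2 * Real.pi^2 : ℝ) : ℂ) := by
  have : ∀ t : ℝ, (t:ℂ) * Complex.exp (Complex.I * (0:ℤ) * t) = ((t:ℝ):ℂ) := by
    intro t; simp
  rw [intervalIntegral.integral_congr (fun t _ => this t)]
  rw [intervalIntegral.integral_ofReal]
  rw [integral_id]
  push_cast
  ring

open Complex intervalIntegral in
lemma integral_eq {R : ℕ} (u : Fin R → ℂ) :
    (∫ t in (0:ℝ)..(2*Real.pi), t * ‖phi u t‖ ^ 2)
      = Real.pi * (∑ n, ‖u n‖ ^ 2) + qform u := by
  classical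
  set J : Fin R → Fin R → ℂ := fun m n =>
    if m = n then ((2 * Real.pi^2 : ℝ) : ℂ) else
      -2 * Real.pi * Complex.I / ((((m:ℕ):ℤ) - ((n:ℕ):ℤ) : ℤ) : ℂ) with hJ
  have hJint : ∀ m n : Fin R,
      (∫ t in (0:ℝ)..(2*Real.pi), (t:ℂ) * Complex.exp (Complex.I * ((((m:ℕ):ℤ) - ((n:ℕ):ℤ) : ℤ) : ℂ) * t))
        = J m n := by
    intro m n
    by_cases h : m = n
    · subst h
      simp only [hJ, if_pos rfl]
      simpa using Jint_zero
    · have hk : ((m:ℕ):ℤ) - ((n:ℕ):ℤ) ≠ 0 := by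
        intro hc
        apply h
        have : ((m:ℕ):ℤ) = ((n:ℕ):ℤ) := by omega
        exact Fin.ext (by exact_mod_cast this)
      simp only [hJ, if_neg h]
      exact Jint_ne _ hk
  -- continuity of each elementary integrand
  have hcont : ∀ m n : Fin R, Continuous fun t : ℝ =>
      (u m * (starRingEnd ℂ) (u n)) * ((t:ℂ) * Complex.exp (Complex.I * ((((m:ℕ):ℤ) - ((n:ℕ):ℤ) : ℤ) : ℂ) * t)) := by
    intro m n; fun_prop
  -- step 1: pointwise real part form
  have hpt : ∀ t : ℝ, t * ‖phi u t‖ ^ 2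
      = (((2*Real.pi : ℝ) : ℂ)⁻¹ * ∑ m : Fin R, ∑ n : Fin R,
        (u m * (starRingEnd ℂ) (u n)) *
          ((t:ℂ) * Complex.exp (Complex.I * ((((m:ℕ):ℤ) - ((n:ℕ):ℤ) : ℤ) : ℂ) * t))).re := by
    intro t
    rw [← phi_mul_conj]
    rw [Complex.mul_conj]
    rw [← Complex.ofReal_mul]
    rw [Complex.ofReal_re]
    rw [Complex.sq_norm]
  rw [intervalIntegral.integral_congr (fun t _ => hpt t)]
  -- step 2: swap re and integral
  have hG : IntervalIntegrable (fun t : ℝ => (((2*Real.pi : ℝ) : ℂ)⁻¹ * ∑ m : Fin R, ∑ n : Fin R,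
        (u m * (starRingEnd ℂ) (u n)) *
          ((t:ℂ) * Complex.exp (Complex.I * ((((m:ℕ):ℤ) - ((n:ℕ):ℤ) : ℤ) : ℂ) * t))))
      MeasureTheory.volume 0 (2*Real.pi) := by
    apply Continuous.intervalIntegrable
    fun_prop
  have hre := Complex.reCLM.intervalIntegral_comp_comm hG
  simp only [Complex.reCLM_apply] at hre
  rw [hre]
  -- step 3: compute the complex integral
  rw [intervalIntegral.integral_const_mul]
  rw [intervalIntegral.integral_finset_sum (fun m _ => by
    apply Continuous.intervalIntegrable; fun_prop)]
  have : ∀ m : Fin R, (∫ t in (0:ℝ)..(2*Real.pi), ∑ n : Fin R,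
      (u m * (starRingEnd ℂ) (u n)) * ((t:ℂ) * Complex.exp (Complex.I * ((((m:ℕ):ℤ) - ((n:ℕ):ℤ) : ℤ) : ℂ) * t)))
      = ∑ n : Fin R, (u m * (starRingEnd ℂ) (u n)) * J m n := by
    intro m
    rw [intervalIntegral.integral_finset_sum (fun n _ => by
      apply Continuous.intervalIntegrable; fun_prop)]
    refine Finset.sum_congr rfl fun n _ => ?_
    rw [intervalIntegral.integral_const_mul, hJint]
  rw [Finset.sum_congr rfl fun m _ => this m]
  -- step 4: take real parts termwise
  rw [Finset.mul_sum]
  rw [Complex.re_sum]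
  have hterm : ∀ m : Fin R, (((2*Real.pi : ℝ) : ℂ)⁻¹ * ∑ n : Fin R, (u m * (starRingEnd ℂ) (u n)) * J m n).re
      = ∑ n : Fin R, ((if m = n then Real.pi * ‖u m‖ ^ 2 else 0)
          + ((u m).im * (u n).re - (u m).re * (u n).im) * Tmat R m n) := by
    intro m
    rw [Finset.mul_sum, Complex.re_sum]
    refine Finset.sum_congr rfl fun n _ => ?_
    by_cases h : m = n
    · subst h
      simp only [hJ, if_pos rfl, Tmat, Matrix.of_apply, if_pos rfl, mul_zero, add_zero]
      rw [Complex.mul_conj]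
      rw [show (((2*Real.pi : ℝ) : ℂ)⁻¹ * ((Complex.normSq (u m) : ℝ) * ((2 * Real.pi^2 : ℝ) : ℂ)))
          = (((2*Real.pi)⁻¹ * (Complex.normSq (u m) * (2 * Real.pi^2)) : ℝ) : ℂ) from by push_cast; ring]
      rw [Complex.ofReal_re, Complex.sq_norm]
      simp only [↓reduceIte]
      have hpi : (2*Real.pi) ≠ 0 := by positivity
      field_simp
      ring
    · have hk : ((m:ℕ):ℤ) - ((n:ℕ):ℤ) ≠ 0 := by
        intro hc
        exact h (Fin.ext (by omega))
      have hkR : ((m:ℕ):ℝ) - ((n:ℕ):ℝ) ≠ 0 := by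
        intro hc
        apply hk
        have : ((m:ℕ):ℝ) = ((n:ℕ):ℝ) := by linarith
        exact_mod_cast sub_eq_zero.mpr this
      simp only [hJ, if_neg h, Tmat, Matrix.of_apply, if_neg h]
      have hpi : ((2*Real.pi : ℝ) : ℂ) ≠ 0 := by
        simp only [ne_eq, Complex.ofReal_eq_zero]
        positivity
      have hkC : ((((m:ℕ):ℤ) - ((n:ℕ):ℤ) : ℤ) : ℂ) ≠ 0 := Int.cast_ne_zero.mpr hk
      have : ((2*Real.pi : ℝ) : ℂ)⁻¹ * ((u m * (starRingEnd ℂ) (u n)) *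
          (-2 * Real.pi * Complex.I / ((((m:ℕ):ℤ) - ((n:ℕ):ℤ) : ℤ) : ℂ)))
          = (u m * (starRingEnd ℂ) (u n)) * (-Complex.I) * ((((((m:ℕ):ℤ) - ((n:ℕ):ℤ) : ℤ) : ℝ))⁻¹ : ℝ) := by
        rw [Complex.ofReal_inv, Complex.ofReal_intCast,
          show ((2*Real.pi : ℝ) : ℂ) = 2 * (Real.pi : ℂ) from by push_cast; ring]
        have hpi2 : (Real.pi : ℂ) ≠ 0 := by
          simp [Real.pi_ne_zero]
        field_simp
      rw [this]
      simp only [Complex.mul_re, Complex.ofReal_re, Complex.ofReal_im, Complex.neg_re,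
        Complex.neg_im, Complex.I_re, Complex.I_im, Complex.mul_im, Complex.conj_re,
        Complex.conj_im, mul_zero, zero_mul, sub_zero, zero_sub, mul_one, mul_neg, neg_neg,
        neg_zero, add_zero, zero_add]
      push_cast
      field_simp
      ring
  rw [Finset.sum_congr rfl fun m _ => hterm m]
  simp only [Finset.sum_add_distrib]
  congr 1
  rw [Finset.mul_sum]
  refine Finset.sum_congr rfl fun m _ => ?_
  simp


noncomputable def Bf {R : ℕ} (x y : Fin R → ℝ) : ℝ :=
  ∑ m : Fin R, ∑ n : Fin R, x m * Tmat R m n * y n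

lemma Tmat_anti {R : ℕ} (m n : Fin R) : Tmat R m n = - Tmat R n m := by
  unfold Tmat
  by_cases h : m = n
  · subst h; simp
  · simp only [Matrix.of_apply, if_neg h, if_neg (Ne.symm h)]
    rw [show ((m:ℝ) - (n:ℝ)) = -((n:ℝ) - (m:ℝ)) from by ring, one_div, one_div, inv_neg]

lemma Bf_skew {R : ℕ} (x y : Fin R → ℝ) : Bf x y = - Bf y x := by
  unfold Bf
  rw [Finset.sum_comm, ← Finset.sum_neg_distrib]
  refine Finset.sum_congr rfl fun m _ => ?_
  rw [← Finset.sum_neg_distrib]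
  refine Finset.sum_congr rfl fun n _ => ?_
  rw [Tmat_anti]
  ring

lemma Bf_inner {R : ℕ} (x y : Fin R → ℝ) :
    Bf x y = inner ℝ ((WithLp.equiv 2 (Fin R → ℝ)).symm x)
      ((Matrix.toEuclideanCLM (𝕜 := ℝ) (Tmat R)) ((WithLp.equiv 2 (Fin R → ℝ)).symm y)) := by
  rw [PiLp.inner_apply]
  unfold Bf
  refine Finset.sum_congr rfl fun m _ => ?_
  have : ((Matrix.toEuclideanCLM (𝕜 := ℝ) (Tmat R)) ((WithLp.equiv 2 (Fin R → ℝ)).symm y)) m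
      = ∑ n : Fin R, Tmat R m n * y n := by
    rw [Matrix.toEuclideanCLM_toLp]
    show (Matrix.toLin' (Tmat R)) y m = _
    rw [Matrix.toLin'_apply]
    rfl
  rw [this]
  simp only [RCLike.inner_apply, starRingEnd_apply, star_trivial]
  rw [Finset.sum_mul]
  refine Finset.sum_congr rfl fun n _ => ?_
  show x m * Tmat R m n * y n = (Tmat R m n * y n) * x m
  ring

lemma sum_sq_eq {R : ℕ} (x : Fin R → ℝ) :
    ∑ i, x i ^ 2 = ‖(WithLp.equiv 2 (Fin R → ℝ)).symm x‖ ^ 2 := by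
  rw [← real_inner_self_eq_norm_sq, PiLp.inner_apply]
  refine Finset.sum_congr rfl fun i _ => ?_
  simp [sq]

lemma Bf_bound {R : ℕ} (x y : Fin R → ℝ) :
    |Bf x y| ≤ specNorm (Tmat R) * ‖(WithLp.equiv 2 (Fin R → ℝ)).symm x‖ *
      ‖(WithLp.equiv 2 (Fin R → ℝ)).symm y‖ := by
  rw [Bf_inner]
  set X := (WithLp.equiv 2 (Fin R → ℝ)).symm x
  set Y := (WithLp.equiv 2 (Fin R → ℝ)).symm y
  calc |inner ℝ X ((Matrix.toEuclideanCLM (𝕜 := ℝ) (Tmat R)) Y)|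
      ≤ ‖X‖ * ‖(Matrix.toEuclideanCLM (𝕜 := ℝ) (Tmat R)) Y‖ := abs_real_inner_le_norm _ _
    _ ≤ ‖X‖ * (specNorm (Tmat R) * ‖Y‖) := by
        gcongr
        exact ContinuousLinearMap.le_opNorm _ _
    _ = specNorm (Tmat R) * ‖X‖ * ‖Y‖ := by ring

lemma qform_eq_Bf {R : ℕ} (u : Fin R → ℂ) :
    qform u = Bf (fun n => (u n).im) (fun n => (u n).re)
      - Bf (fun n => (u n).re) (fun n => (u n).im) := by
  unfold qform Bf
  rw [← Finset.sum_sub_distrib]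
  refine Finset.sum_congr rfl fun m _ => ?_
  rw [← Finset.sum_sub_distrib]
  refine Finset.sum_congr rfl fun n _ => ?_
  ring

lemma qform_lower {R : ℕ} (u : Fin R → ℂ) (hu : (∑ n, ‖u n‖ ^ 2) = 1) :
    -specNorm (Tmat R) ≤ qform u := by
  set N := specNorm (Tmat R) with hN
  have hN0 : 0 ≤ N := norm_nonneg _
  set x : Fin R → ℝ := fun n => (u n).re
  set y : Fin R → ℝ := fun n => (u n).im
  set X := (WithLp.equiv 2 (Fin R → ℝ)).symm x
  set Y := (WithLp.equiv 2 (Fin R → ℝ)).symm y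
  have hsum : ‖X‖^2 + ‖Y‖^2 = 1 := by
    rw [← sum_sq_eq, ← sum_sq_eq, ← Finset.sum_add_distrib, ← hu]
    refine Finset.sum_congr rfl fun n _ => ?_
    rw [Complex.sq_norm, Complex.normSq_apply]
    ring
  have h1 := Bf_bound y x
  have h2 := Bf_bound x y
  have h3 : 2 * (‖X‖ * ‖Y‖) ≤ ‖X‖^2 + ‖Y‖^2 := by nlinarith [sq_nonneg (‖X‖ - ‖Y‖)]
  have := qform_eq_Bf u
  have habs : |qform u| ≤ N := by
    rw [this]
    calc |Bf y x - Bf x y| ≤ |Bf y x| + |Bf x y| := abs_sub _ _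
      _ ≤ N * ‖Y‖ * ‖X‖ + N * ‖X‖ * ‖Y‖ := add_le_add h1 h2
      _ = N * (2 * (‖X‖ * ‖Y‖)) := by ring
      _ ≤ N * (‖X‖^2 + ‖Y‖^2) := by nlinarith
      _ = N := by rw [hsum, mul_one]
  linarith [neg_abs_le (qform u), habs]

lemma Bf_smul {R : ℕ} (s s' : ℝ) (x y : Fin R → ℝ) :
    Bf (fun n => s * x n) (fun n => s' * y n) = s * s' * Bf x y := by
  unfold Bf
  rw [Finset.mul_sum]
  refine Finset.sum_congr rfl fun m _ => ?_
  rw [Finset.mul_sum]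
  refine Finset.sum_congr rfl fun n _ => ?_
  ring

lemma qform_exists_lt {R : ℕ} (hR : 1 ≤ R) {ε : ℝ} (hε : 0 < ε) :
    ∃ u : Fin R → ℂ, (∑ n, ‖u n‖ ^ 2) = 1 ∧
      qform u < -specNorm (Tmat R) + ε := by
  classical
  set L := Matrix.toEuclideanCLM (𝕜 := ℝ) (Tmat R) with hL
  have hNdef : specNorm (Tmat R) = ‖L‖ := rfl
  by_cases hN : specNorm (Tmat R) = 0
  · -- trivial case: use a standard basis vector
    set i0 : Fin R := ⟨0, hR⟩
    refine ⟨fun n => if n = i0 then 1 else 0, ?_, ?_⟩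
    · have : ∀ n : Fin R, ‖(if n = i0 then (1:ℂ) else 0)‖ ^ 2
          = if n = i0 then 1 else 0 := by
        intro n; by_cases h : n = i0 <;> simp [h]
      rw [Finset.sum_congr rfl fun n _ => this n]
      simp
    · have him : ∀ n : Fin R, ((if n = i0 then (1:ℂ) else 0)).im = 0 := by
        intro n; by_cases h : n = i0 <;> simp [h]
      have : qform (fun n => if n = i0 then (1:ℂ) else 0) = 0 := by
        unfold qform
        refine Finset.sum_eq_zero fun m _ => Finset.sum_eq_zero fun n _ => ?_
        rw [him, him]
        ring
      rw [this, hN]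
      linarith
  · have hNpos : 0 < specNorm (Tmat R) :=
      lt_of_le_of_ne (norm_nonneg _) (Ne.symm hN)
    set N := specNorm (Tmat R) with hNd
    set δ := min ε N with hδd
    have hδ : 0 < δ := lt_min hε hNpos
    have hδN : δ ≤ N := min_le_right _ _
    have hδε : δ ≤ ε := min_le_left _ _
    have hr : N - δ < ‖L‖ := by rw [← hNdef]; linarith
    obtain ⟨a, ha1, hra⟩ := L.exists_lt_apply_of_lt_opNorm hr
    have hr0 : 0 ≤ N - δ := by linarith
    have hLa : 0 < ‖L a‖ := lt_of_le_of_lt hr0 hra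
    have ha0 : a ≠ 0 := by
      intro h
      rw [h, map_zero, norm_zero] at hLa
      exact lt_irrefl _ hLa
    have hna : 0 < ‖a‖ := norm_pos_iff.mpr ha0
    set ah := ‖a‖⁻¹ • a with hahd
    have hah : ‖ah‖ = 1 := norm_smul_inv_norm ha0
    set w := L ah with hwd
    have hw : N - δ < ‖w‖ := by
      have h1 : ‖w‖ = ‖a‖⁻¹ * ‖L a‖ := by
        rw [hwd, hahd, map_smul, norm_smul, Real.norm_eq_abs, abs_of_pos (by positivity)]
      have h2 : 1 ≤ ‖a‖⁻¹ := (one_le_inv₀ hna).mpr (le_of_lt ha1)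
      calc N - δ < ‖L a‖ := hra
        _ = 1 * ‖L a‖ := (one_mul _).symm
        _ ≤ ‖a‖⁻¹ * ‖L a‖ := by gcongr
        _ = ‖w‖ := h1.symm
    have hw0 : 0 < ‖w‖ := lt_of_le_of_lt hr0 hw
    set b := ‖w‖⁻¹ • w with hbd
    have hb : ‖b‖ = 1 := norm_smul_inv_norm (by
      intro h; rw [h, norm_zero] at hw0; exact lt_irrefl _ hw0)
    set s : ℝ := (Real.sqrt 2)⁻¹ with hsd
    have hs2 : s ^ 2 = 1 / 2 := by
      rw [hsd, ← one_div, div_pow, one_pow, Real.sq_sqrt (by norm_num : (0:ℝ) ≤ 2)]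
    refine ⟨fun n => ⟨s * b n, s * ah n⟩, ?_, ?_⟩
    · have : ∀ n : Fin R, ‖(⟨s * b n, s * ah n⟩ : ℂ)‖ ^ 2
          = s^2 * (b n)^2 + s^2 * (ah n)^2 := by
        intro n
        rw [Complex.sq_norm, Complex.normSq_apply]
        ring
      rw [Finset.sum_congr rfl fun n _ => this n, Finset.sum_add_distrib,
        ← Finset.mul_sum, ← Finset.mul_sum]
      have hbs : ∑ n, (b n)^2 = 1 := by
        have h := sum_sq_eq (fun n => b n)
        have he : (WithLp.equiv 2 (Fin R → ℝ)).symm (fun n => b n) = b := rfl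
        rw [he] at h
        rw [h, hb, one_pow]
      have hahs : ∑ n, (ah n)^2 = 1 := by
        have h := sum_sq_eq (fun n => ah n)
        have he : (WithLp.equiv 2 (Fin R → ℝ)).symm (fun n => ah n) = ah := rfl
        rw [he] at h
        rw [h, hah, one_pow]
      rw [hbs, hahs, hs2]
      norm_num
    · have hq : qform (fun n => ⟨s * b n, s * ah n⟩) = - Bf (fun n => b n) (fun n => ah n) := by
        rw [qform_eq_Bf]
        show Bf (fun n => s * ah n) (fun n => s * b n)
            - Bf (fun n => s * b n) (fun n => s * ah n) = _
        rw [Bf_smul, Bf_smul, Bf_skew (fun n => ah n) (fun n => b n)]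
        rw [show s * s = 1/2 from by rw [← sq]; exact hs2]
        ring
      have hBf : Bf (fun n => b n) (fun n => ah n) = ‖w‖ := by
        rw [Bf_inner]
        have he1 : (WithLp.equiv 2 (Fin R → ℝ)).symm (fun n => b n) = b := rfl
        have he2 : (WithLp.equiv 2 (Fin R → ℝ)).symm (fun n => ah n) = ah := rfl
        rw [he1, he2, ← hL, ← hwd, hbd]
        rw [real_inner_smul_left, real_inner_self_eq_norm_sq]
        field_simp
      rw [hq, hBf]
      linarith


/-- `π - ‖T_R‖` equals the infimum over unit vectors `u ∈ ℂ^R` of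
`∫_0^{2π} x |φ_u(x)|² dx`. -/
theorem pi_sub_specNorm_eq_sInf (R : ℕ) (hR : 1 ≤ R) :
    Real.pi - specNorm (Tmat R) =
      sInf {y : ℝ | ∃ u : Fin R → ℂ,
        (∑ n, ‖u n‖ ^ 2) = 1 ∧
        y = ∫ t in (0 : ℝ)..(2 * Real.pi), t * ‖phi u t‖ ^ 2} := by
  set S := {y : ℝ | ∃ u : Fin R → ℂ,
        (∑ n, ‖u n‖ ^ 2) = 1 ∧
        y = ∫ t in (0 : ℝ)..(2 * Real.pi), t * ‖phi u t‖ ^ 2} with hS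
  have hval : ∀ u : Fin R → ℂ, (∑ n, ‖u n‖ ^ 2) = 1 →
      (∫ t in (0:ℝ)..(2*Real.pi), t * ‖phi u t‖ ^ 2)
        = Real.pi + qform u := by
    intro u hu
    rw [integral_eq, hu, mul_one]
  have hlow : ∀ y ∈ S, Real.pi - specNorm (Tmat R) ≤ y := by
    rintro y ⟨u, hu, rfl⟩
    rw [hval u hu]
    have := qform_lower u hu
    linarith
  have hbdd : BddBelow S := ⟨_, hlow⟩
  obtain ⟨u1, hu1, _⟩ := qform_exists_lt hR one_pos
  have hne : S.Nonempty := ⟨_, ⟨u1, hu1, rfl⟩⟩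
  apply le_antisymm
  · exact le_csInf hne hlow
  · apply le_of_forall_pos_le_add
    intro ε hε
    obtain ⟨u, hu, hq⟩ := qform_exists_lt hR hε
    have hmem : (Real.pi + qform u) ∈ S := ⟨u, hu, (hval u hu).symm⟩
    calc sInf S ≤ Real.pi + qform u := csInf_le hbdd hmem
      _ ≤ Real.pi - specNorm (Tmat R) + ε := by linarith
end

section
/- There exists a constant b > 0 such that for every integer R ≥ 3, π − ‖T_R‖ ≤ (π e log R)/R + (2π e³)/R; in particular π − ‖T_R‖ ≤ b (log R)/R for all R ≥ 2. -/
set_option maxHeartbeats 1000000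

section HilbAux

open Real Finset Polynomial

section GenericW

variable (w : ℕ → ℝ)


variable (w : ℕ → ℝ)

noncomputable def gg (R : ℕ) (t : ℝ) : ℝ :=
  (∑ n ∈ range R, w n * Real.cos (n * t)) ^ 2 +
  (∑ n ∈ range R, w n * Real.sin (n * t)) ^ 2

lemma gg_cont (R : ℕ) : Continuous (gg w R) := by
  apply Continuous.add <;> apply Continuous.pow <;> apply continuous_finset_sum <;>
    intro i _ <;> fun_prop

lemma gg_expand (R : ℕ) (t : ℝ) :
    gg w R t = ∑ m ∈ range R, ∑ n ∈ range R, w m * w n * Real.cos (((m : ℝ) - n) * t) := by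
  rw [gg, sq, sq, Finset.sum_mul_sum, Finset.sum_mul_sum, ← Finset.sum_add_distrib]
  refine Finset.sum_congr rfl fun m _ => ?_
  rw [← Finset.sum_add_distrib]
  refine Finset.sum_congr rfl fun n _ => ?_
  rw [sub_mul, Real.cos_sub]; ring

lemma ici (k : ℝ) (a b : ℝ) :
    ∫ t in a..b, Real.cos (k * t) =
      if k = 0 then b - a else (Real.sin (k * b) - Real.sin (k * a)) / k := by
  split_ifs with h
  · simp [h]
  · rw [intervalIntegral.integral_comp_mul_left (fun t => Real.cos t) h, integral_cos]
    simp [smul_eq_mul]; ring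

lemma gg_int (R : ℕ) (a b : ℝ) :
    ∫ t in a..b, gg w R t = ∑ m ∈ range R, ∑ n ∈ range R,
      w m * w n * ∫ t in a..b, Real.cos (((m : ℝ) - n) * t) := by
  have h1 : (∫ x in a..b, ∑ m ∈ range R, ∑ n ∈ range R,
        w m * w n * Real.cos (((m : ℝ) - n) * x))
      = ∑ m ∈ range R, ∫ x in a..b, ∑ n ∈ range R, w m * w n * Real.cos (((m : ℝ) - n) * x) :=
    intervalIntegral.integral_finset_sum
      (f := fun m x => ∑ n ∈ range R, w m * w n * Real.cos (((m : ℝ) - n) * x))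
      (fun m _ => Continuous.intervalIntegrable
        (continuous_finset_sum _ (fun n _ => by fun_prop)) _ _)
  have h2 : ∀ m : ℕ, (∫ x in a..b, ∑ n ∈ range R, w m * w n * Real.cos (((m : ℝ) - n) * x))
      = ∑ n ∈ range R, ∫ x in a..b, w m * w n * Real.cos (((m : ℝ) - n) * x) :=
    fun m => intervalIntegral.integral_finset_sum
      (f := fun n x => w m * w n * Real.cos (((m : ℝ) - n) * x))
      (fun n _ => Continuous.intervalIntegrable (by fun_prop) _ _)
  rw [intervalIntegral.integral_congr (g := fun t => ∑ m ∈ range R, ∑ n ∈ range R,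
        w m * w n * Real.cos (((m : ℝ) - n) * t)) (fun t _ => gg_expand w R t)]
  rw [h1]
  refine Finset.sum_congr rfl fun m _ => ?_
  rw [h2 m]
  exact Finset.sum_congr rfl fun n _ => intervalIntegral.integral_const_mul _ _

lemma gg_total (R : ℕ) : ∫ t in (-π)..π, gg w R t = 2 * π * ∑ n ∈ range R, (w n)^2 := by
  rw [gg_int]
  have : ∀ m ∈ range R, ∀ n ∈ range R,
      w m * w n * ∫ t in (-π)..π, Real.cos (((m : ℝ) - n) * t)
      = if m = n then 2 * π * (w n)^2 else 0 := by
    intro m _ n _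
    rw [ici]
    by_cases hmn : m = n
    · subst hmn
      rw [if_pos rfl, if_pos (by ring)]
      ring
    · have hk : ((m:ℝ) - n) ≠ 0 := by
        intro h; exact hmn (by exact_mod_cast sub_eq_zero.mp h)
      rw [if_neg hk, if_neg hmn]
      have hs : Real.sin (((m:ℝ) - n) * π) = 0 := by
        have : ((m:ℝ) - n) = ((m - n : ℤ) : ℝ) := by push_cast; ring
        rw [this, Real.sin_int_mul_pi]
      rw [show ((m:ℝ) - n) * (-π) = -(((m:ℝ)-n)*π) by ring, Real.sin_neg, hs]
      simp
  rw [Finset.sum_congr rfl (fun m hm => Finset.sum_congr rfl (fun n hn => this m hm n hn))]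
  rw [Finset.mul_sum]
  refine Finset.sum_congr rfl fun n hn => ?_
  simp [Finset.sum_ite_eq, hn]

lemma gg_half (R : ℕ) : ∫ t in (0:ℝ)..π, gg w R t = π * ∑ n ∈ range R, (w n)^2 := by
  have heven : ∀ t : ℝ, gg w R (-t) = gg w R t := by
    intro t; rw [gg, gg]
    congr 1
    · congr 1; refine Finset.sum_congr rfl fun n _ => ?_; rw [mul_neg, Real.cos_neg]
    · rw [show (∑ n ∈ range R, w n * Real.sin ((n:ℝ) * -t)) = -∑ n ∈ range R, w n * Real.sin (n * t) by
        rw [← Finset.sum_neg_distrib]; exact Finset.sum_congr rfl fun n _ => by rw [mul_neg, Real.sin_neg]; ring]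
      rw [neg_sq]
  have hint : IntervalIntegrable (gg w R) MeasureTheory.volume (-π) 0 :=
    (gg_cont w R).intervalIntegrable _ _
  have hint2 : IntervalIntegrable (gg w R) MeasureTheory.volume 0 π :=
    (gg_cont w R).intervalIntegrable _ _
  have hsplit := intervalIntegral.integral_add_adjacent_intervals hint hint2
  have hneg : ∫ t in (-π)..(0:ℝ), gg w R t = ∫ t in (0:ℝ)..π, gg w R t := by
    have := intervalIntegral.integral_comp_neg (a := (0:ℝ)) (b := π) (fun t => gg w R t)
    simp only [heven, neg_zero] at this
    rw [← this]
  have htot := gg_total w R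
  rw [← hsplit, hneg] at htot
  linarith

lemma D_id (R : ℕ) (θ : ℝ) :
    ∑ m ∈ range R, ∑ n ∈ range R,
      (w m * Real.sin (m * θ)) * (if m = n then 0 else 1 / ((m : ℝ) - n)) *
        (w n * Real.cos (n * θ))
    = ((∫ t in (0:ℝ)..θ, gg w R t) - θ * ∑ n ∈ range R, (w n)^2) / 2 := by
  set k : ℕ → ℕ → ℝ := fun m n => if m = n then 0 else 1 / ((m : ℝ) - n) with hk
  have hkanti : ∀ m n, k n m = - k m n := by
    intro m n
    by_cases h : m = n
    · simp [hk, h]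
    · rw [hk]
      simp only [if_neg h, if_neg (Ne.symm h)]
      have : ((n:ℝ) - m) = -((m:ℝ) - n) := by ring
      rw [this, one_div, inv_neg, one_div]
  set f1 : ℕ → ℕ → ℝ := fun m n => w m * w n * Real.sin (((m:ℝ) + n) * θ) * k m n with hf1
  set f2 : ℕ → ℕ → ℝ := fun m n => w m * w n * Real.sin (((m:ℝ) - n) * θ) * k m n with hf2
  have hterm : ∀ m n : ℕ,
      (w m * Real.sin (m * θ)) * k m n * (w n * Real.cos (n * θ))
        = (f1 m n + f2 m n) / 2 := by
    intro m n
    rw [hf1, hf2]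
    simp only
    rw [add_mul, sub_mul, Real.sin_add, Real.sin_sub]
    ring
  have hS1 : ∑ m ∈ range R, ∑ n ∈ range R, f1 m n = 0 := by
    have hswap : ∑ m ∈ range R, ∑ n ∈ range R, f1 m n
        = ∑ m ∈ range R, ∑ n ∈ range R, f1 n m := Finset.sum_comm
    have hskew : ∀ m n : ℕ, f1 n m = - f1 m n := by
      intro m n
      rw [hf1]
      simp only
      rw [hkanti m n, show ((n:ℝ) + m) = ((m:ℝ) + n) by ring]
      ring
    have : ∑ m ∈ range R, ∑ n ∈ range R, f1 m n
        = - ∑ m ∈ range R, ∑ n ∈ range R, f1 m n := by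
      nth_rewrite 1 [hswap]
      rw [← Finset.sum_neg_distrib]
      refine Finset.sum_congr rfl fun m _ => ?_
      rw [← Finset.sum_neg_distrib]
      exact Finset.sum_congr rfl fun n _ => by rw [hskew]
    linarith
  have hS2 : ∑ m ∈ range R, ∑ n ∈ range R, f2 m n
      = (∫ t in (0:ℝ)..θ, gg w R t) - θ * ∑ n ∈ range R, (w n)^2 := by
    have hterm2 : ∀ m n : ℕ, f2 m n
        = w m * w n * (∫ t in (0:ℝ)..θ, Real.cos (((m:ℝ) - n) * t))
          - (if m = n then θ * (w m * w n) else 0) := by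
      intro m n
      rw [ici]
      by_cases h : m = n
      · subst h
        rw [hf2]
        simp [hk]
        ring
      · have hne : ((m:ℝ) - n) ≠ 0 := by
          intro hz; exact h (by exact_mod_cast sub_eq_zero.mp hz)
        rw [hf2]
        simp only [if_neg hne, if_neg h, hk]
        rw [show ((m:ℝ) - n) * 0 = 0 by ring, Real.sin_zero]
        ring
    rw [Finset.sum_congr rfl (fun m _ => Finset.sum_congr rfl (fun n _ => hterm2 m n))]
    have hsplit : ∀ m ∈ range R,
        (∑ n ∈ range R, (w m * w n * (∫ t in (0:ℝ)..θ, Real.cos (((m:ℝ) - n) * t))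
          - (if m = n then θ * (w m * w n) else 0)))
        = (∑ n ∈ range R, w m * w n * (∫ t in (0:ℝ)..θ, Real.cos (((m:ℝ) - n) * t)))
          - (∑ n ∈ range R, if m = n then θ * (w m * w n) else 0) :=
      fun m _ => Finset.sum_sub_distrib _ _
    rw [Finset.sum_congr rfl hsplit, Finset.sum_sub_distrib, ← gg_int]
    congr 1
    rw [Finset.mul_sum]
    refine Finset.sum_congr rfl fun m hm => ?_
    rw [Finset.sum_ite_eq (range R) m (fun n => θ * (w m * w n))]
    rw [if_pos hm]
    ring
  calc ∑ m ∈ range R, ∑ n ∈ range R,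
      (w m * Real.sin (m * θ)) * k m n * (w n * Real.cos (n * θ))
      = ∑ m ∈ range R, ∑ n ∈ range R, (f1 m n + f2 m n) / 2 :=
        Finset.sum_congr rfl fun m _ => Finset.sum_congr rfl fun n _ => hterm m n
    _ = ((∑ m ∈ range R, ∑ n ∈ range R, f1 m n)
          + ∑ m ∈ range R, ∑ n ∈ range R, f2 m n) / 2 := by
        rw [show (∑ m ∈ range R, ∑ n ∈ range R, (f1 m n + f2 m n) / 2)
            = (∑ m ∈ range R, ∑ n ∈ range R, (f1 m n + f2 m n)) / 2 by
          rw [Finset.sum_div]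
          exact Finset.sum_congr rfl fun m _ => (Finset.sum_div _ _ _).symm]
        rw [Finset.sum_congr rfl (fun m _ => Finset.sum_add_distrib
          (f := fun n => f1 m n) (g := fun n => f2 m n)), Finset.sum_add_distrib]
    _ = ((∫ t in (0:ℝ)..θ, gg w R t) - θ * ∑ n ∈ range R, (w n)^2) / 2 := by
        rw [hS1, hS2]; ring_nf

end GenericW


noncomputable def hQ (L p : ℕ) : Polynomial ℝ := ((range L).sum fun j => X ^ j) ^ p
noncomputable def hw (L p n : ℕ) : ℝ := (hQ L p).coeff n

lemma hQ_natDegree_le (L p : ℕ) : (hQ L p).natDegree ≤ p * (L - 1) := by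
  calc (hQ L p).natDegree ≤ p * (∑ j ∈ range L, (X:Polynomial ℝ)^j).natDegree :=
        Polynomial.natDegree_pow_le
    _ ≤ p * (L-1) := by
        apply Nat.mul_le_mul_left
        apply (Polynomial.natDegree_sum_le _ _).trans
        rw [Finset.fold_max_le]
        refine ⟨by omega, fun i hi => ?_⟩
        simp only [Function.comp, Polynomial.natDegree_X_pow]
        simp at hi; omega

lemma hw_sum (L p N : ℕ) (hN : p * (L - 1) < N) :
    ∑ n ∈ range N, hw L p n = (L:ℝ)^p := by
  have hdeg : (hQ L p).natDegree < N := lt_of_le_of_lt (hQ_natDegree_le L p) hN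
  have := Polynomial.aeval_eq_sum_range' (S := ℝ) hdeg (1:ℝ)
  rw [Polynomial.aeval_def] at this
  simp only [smul_eq_mul, one_pow, mul_one] at this
  rw [show Polynomial.eval₂ (algebraMap ℝ ℝ) 1 (hQ L p) = Polynomial.eval 1 (hQ L p) from rfl] at this
  rw [hQ] at this
  rw [Polynomial.eval_pow, Polynomial.eval_finset_sum] at this
  simp only [Polynomial.eval_pow, Polynomial.eval_X, one_pow, Finset.sum_const,
    Finset.card_range, nsmul_eq_mul, mul_one] at this
  unfold hw
  rw [hQ]
  exact this.symm

lemma hw_sumC (L p R : ℕ) (hR : p * (L - 1) < R) (z : ℂ) :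
    ∑ n ∈ range R, (hw L p n : ℂ) * z^n = (∑ j ∈ range L, z^j)^p := by
  have hdeg : (hQ L p).natDegree < R := lt_of_le_of_lt (hQ_natDegree_le L p) hR
  have h1 := Polynomial.aeval_eq_sum_range' (S := ℂ) hdeg z
  have h2 : (Polynomial.aeval z) (hQ L p) = (∑ j ∈ range L, z^j)^p := by
    rw [hQ, map_pow, map_sum]
    simp only [map_pow, Polynomial.aeval_X]
  rw [h2] at h1
  rw [h1]
  refine Finset.sum_congr rfl fun n _ => ?_
  rw [Algebra.smul_def]
  rfl

lemma hc_lower (R L p : ℕ) (hp : 1 ≤ p) (hL : 1 ≤ L) (hdeg : p * (L - 1) < R) :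
    (L : ℝ) ^ (2 * p) ≤ (∑ n ∈ range R, (hw L p n)^2) * (p * L) := by
  set R' := p * (L - 1) + 1 with hR'
  have hR'R : R' ≤ R := by omega
  have hcs := Finset.sum_mul_sq_le_sq_mul_sq (range R') (fun n => hw L p n) (fun _ => 1)
  simp only [mul_one, one_pow] at hcs
  rw [hw_sum L p R' (by omega)] at hcs
  have hsub : ∑ n ∈ range R', (hw L p n)^2 ≤ ∑ n ∈ range R, (hw L p n)^2 :=
    Finset.sum_le_sum_of_subset_of_nonneg (Finset.range_subset_range.mpr hR'R)
      (fun i _ _ => sq_nonneg _)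
  have hcard : (∑ _n ∈ range R', (1:ℝ)) = (R' : ℝ) := by simp
  rw [Finset.sum_const, Finset.card_range] at hcs
  have hR'le : (R' : ℝ) ≤ (p : ℝ) * L := by
    have : R' ≤ p * L := by
      have : p * (L - 1) + p ≤ p * L := by
        rw [← Nat.mul_succ]
        exact Nat.mul_le_mul_left p (by omega)
      omega
    exact_mod_cast this
  calc (L:ℝ)^(2*p) = ((L:ℝ)^p)^2 := by rw [← pow_mul, mul_comm]
    _ ≤ (∑ n ∈ range R', (hw L p n)^2) * R' := by
        simpa [nsmul_eq_mul, mul_comm] using hcs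
    _ ≤ (∑ n ∈ range R, (hw L p n)^2) * (p * L) := by
        apply mul_le_mul hsub hR'le (by positivity)
        exact Finset.sum_nonneg fun i _ => sq_nonneg _

lemma gg_pointwise (R L p : ℕ) (hp : 1 ≤ p) (hL : 1 ≤ L) (hdeg : p * (L - 1) < R)
    {t : ℝ} (ht0 : 0 < t) (htπ : t ≤ π) :
    (∑ n ∈ range R, hw L p n * Real.cos (n * t)) ^ 2 +
    (∑ n ∈ range R, hw L p n * Real.sin (n * t)) ^ 2 ≤ (π / t) ^ (2 * p) := by
  set z : ℂ := Complex.exp (t * Complex.I) with hz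
  have hcosb : 2 - 2 * Real.cos t ≥ 4 / π^2 * t^2 := by
    have h1 := Real.cos_le_one_sub_mul_cos_sq (x := t) (by rw [abs_of_pos ht0]; exact htπ)
    have h2 : 4 / π^2 * t^2 = 2 * (2 / π^2 * t^2) := by ring
    linarith
  have htpos : (0:ℝ) < 4 / π^2 * t^2 := by positivity
  have hz2 : z = Complex.ofReal (Real.cos t) + Complex.ofReal (Real.sin t) * Complex.I := by
    rw [hz, Complex.exp_mul_I, Complex.ofReal_cos, Complex.ofReal_sin]
  have hz1 : z ≠ 1 := by
    intro h
    have : Real.cos t = 1 := by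
      have := congrArg Complex.re h
      rw [hz2] at this
      simpa [Complex.cos_ofReal_re] using this
    rw [this] at hcosb
    nlinarith
  have hnorm1 : ‖z - 1‖ ≥ 2 * t / π := by
    have hsq : ‖z - 1‖^2 = 2 - 2 * Real.cos t := by
      rw [hz2]
      rw [show Complex.ofReal (Real.cos t) + Complex.ofReal (Real.sin t) * Complex.I - 1
          = Complex.ofReal (Real.cos t - 1) + Complex.ofReal (Real.sin t) * Complex.I by
        push_cast; ring]
      rw [Complex.sq_norm, Complex.normSq_add_mul_I]
      nlinarith [Real.sin_sq_add_cos_sq t]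
    have h2 : (2 * t / π)^2 ≤ ‖z - 1‖^2 := by
      rw [hsq, div_pow, mul_pow]
      calc (2:ℝ)^2 * t^2 / π^2 = 4 / π^2 * t^2 := by ring
        _ ≤ 2 - 2 * Real.cos t := hcosb
    have h2t : (0:ℝ) ≤ 2 * t / π := by positivity
    nlinarith [norm_nonneg (z - 1)]
  have hgeom : ‖∑ j ∈ range L, z^j‖ ≤ π / t := by
    rw [geom_sum_eq hz1, norm_div]
    have hnum : ‖z^L - 1‖ ≤ 2 := by
      calc ‖z^L - 1‖ ≤ ‖z^L‖ + ‖(1:ℂ)‖ := norm_sub_le _ _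
        _ = 2 := by
            rw [norm_pow, hz,
              show (t:ℂ) * Complex.I = ((t:ℝ):ℂ) * Complex.I from rfl,
              Complex.norm_exp_ofReal_mul_I]
            norm_num
    have hdenpos : (0:ℝ) < 2 * t / π := by positivity
    calc ‖z^L - 1‖ / ‖z - 1‖ ≤ 2 / (2 * t / π) :=
          div_le_div₀ (by norm_num) hnum hdenpos hnorm1
      _ = π / t := by
          field_simp
  set A := ∑ n ∈ range R, hw L p n * Real.cos (n * t) with hA
  set B := ∑ n ∈ range R, hw L p n * Real.sin (n * t) with hB
  have hsum : ∑ n ∈ range R, (hw L p n : ℂ) * z^n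
      = Complex.ofReal A + Complex.ofReal B * Complex.I := by
    have hterm : ∀ n : ℕ, (hw L p n : ℂ) * z^n
        = Complex.ofReal (hw L p n * Real.cos (n*t))
          + Complex.ofReal (hw L p n * Real.sin (n*t)) * Complex.I := by
      intro n
      rw [hz, ← Complex.exp_nat_mul,
        show (n:ℂ) * ((t:ℂ) * Complex.I) = (((n:ℝ)*t : ℝ):ℂ) * Complex.I by push_cast; ring,
        Complex.exp_mul_I, ← Complex.ofReal_cos, ← Complex.ofReal_sin]
      push_cast
      ring
    rw [Finset.sum_congr rfl (fun n _ => hterm n), Finset.sum_add_distrib, hA, hB]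
    push_cast
    rw [← Finset.sum_mul]
  have hnormsum : A^2 + B^2 = ‖∑ n ∈ range R, (hw L p n : ℂ) * z^n‖^2 := by
    rw [hsum, Complex.sq_norm, Complex.normSq_add_mul_I]
  rw [hnormsum, hw_sumC L p R hdeg z, norm_pow]
  have hs1 : ‖∑ j ∈ range L, z^j‖^p ≤ (π/t)^p :=
    pow_le_pow_left₀ (norm_nonneg _) hgeom p
  calc (‖∑ j ∈ range L, z^j‖^p)^2 ≤ ((π/t)^p)^2 :=
        pow_le_pow_left₀ (by positivity) hs1 2
    _ = (π/t)^(2*p) := by rw [← pow_mul, mul_comm]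

lemma spec_bound (R : ℕ) (w : ℕ → ℝ) (θ : ℝ) :
    ∑ m ∈ range R, ∑ n ∈ range R,
      (w m * Real.sin (m * θ)) * (if m = n then 0 else 1 / ((m : ℝ) - n)) *
        (w n * Real.cos (n * θ))
    ≤ specNorm (Tmat R) * ((∑ n ∈ range R, (w n)^2) / 2) := by
  set x : EuclideanSpace ℝ (Fin R) := WithLp.toLp 2 (fun i => w i * Real.cos (i * θ)) with hx
  set y : EuclideanSpace ℝ (Fin R) := WithLp.toLp 2 (fun i => w i * Real.sin (i * θ)) with hy
  set A := Matrix.toEuclideanCLM (𝕜 := ℝ) (Tmat R) with hA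
  have happ : ∀ i : Fin R, (A x) i = ∑ n : Fin R, (Tmat R) i n * x n := by
    intro i
    rfl
  have hinner : (inner ℝ y (A x) : ℝ) = ∑ m ∈ range R, ∑ n ∈ range R,
      (w m * Real.sin (m * θ)) * (if m = n then 0 else 1 / ((m : ℝ) - n)) *
        (w n * Real.cos (n * θ)) := by
    rw [PiLp.inner_apply]
    simp only [RCLike.inner_apply]
    have h1 : ∀ m : Fin R, (starRingEnd ℝ) (y m) * (A x) m
        = ∑ n ∈ range R, (w m * Real.sin ((m:ℕ) * θ))
            * (if (m:ℕ) = n then 0 else 1 / (((m:ℕ) : ℝ) - n)) * (w n * Real.cos (n * θ)) := by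
      intro m
      rw [happ m, starRingEnd_apply, star_trivial]
      rw [show ∑ n : Fin R, (Tmat R) m n * x n
          = ∑ n ∈ range R, (if (m:ℕ) = n then 0 else 1 / (((m:ℕ):ℝ) - n)) * (w n * Real.cos (n * θ)) by
        rw [← Fin.sum_univ_eq_sum_range (fun n => (if (m:ℕ) = n then 0 else 1 / (((m:ℕ):ℝ) - n)) * (w n * Real.cos (n * θ))) R]
        refine Finset.sum_congr rfl fun n _ => ?_
        congr 1
        · rw [Tmat]
          simp only [Matrix.of_apply]
          congr 1
          simp [Fin.val_eq_val]
      ]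
      rw [Finset.mul_sum]
      refine Finset.sum_congr rfl fun n _ => ?_
      rw [hy]
      ring
    rw [Finset.sum_congr rfl (fun m _ => (mul_comm _ _).trans (h1 m))]
    rw [← Fin.sum_univ_eq_sum_range (fun m => ∑ n ∈ range R,
      (w m * Real.sin (m * θ)) * (if m = n then 0 else 1 / ((m : ℝ) - n)) * (w n * Real.cos (n * θ))) R]
  have hcs : (inner ℝ y (A x) : ℝ) ≤ ‖A‖ * (‖x‖ * ‖y‖) := by
    calc (inner ℝ y (A x) : ℝ) ≤ ‖y‖ * ‖A x‖ := real_inner_le_norm y (A x)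
      _ ≤ ‖y‖ * (‖A‖ * ‖x‖) := by
          apply mul_le_mul_of_nonneg_left (A.le_opNorm x) (norm_nonneg y)
      _ = ‖A‖ * (‖x‖ * ‖y‖) := by ring
  have hxy : ‖x‖ * ‖y‖ ≤ (∑ n ∈ range R, (w n)^2) / 2 := by
    have hx2 : ‖x‖^2 = ∑ i : Fin R, (x i)^2 := by
      rw [EuclideanSpace.norm_eq, Real.sq_sqrt (by positivity)]
      exact Finset.sum_congr rfl fun i _ => by rw [Real.norm_eq_abs, sq_abs]
    have hy2 : ‖y‖^2 = ∑ i : Fin R, (y i)^2 := by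
      rw [EuclideanSpace.norm_eq, Real.sq_sqrt (by positivity)]
      exact Finset.sum_congr rfl fun i _ => by rw [Real.norm_eq_abs, sq_abs]
    have hsum : ‖x‖^2 + ‖y‖^2 = ∑ n ∈ range R, (w n)^2 := by
      rw [hx2, hy2, ← Finset.sum_add_distrib]
      rw [← Fin.sum_univ_eq_sum_range (fun n => (w n)^2) R]
      refine Finset.sum_congr rfl fun i _ => ?_
      rw [hx, hy]
      simp only
      rw [mul_pow, mul_pow, ← mul_add]
      rw [show Real.cos ((i:ℕ) * θ)^2 + Real.sin ((i:ℕ) * θ)^2 = 1 from by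
        rw [add_comm]; exact Real.sin_sq_add_cos_sq _]
      ring
    nlinarith [norm_nonneg x, norm_nonneg y, sq_nonneg (‖x‖ - ‖y‖)]
  calc ∑ m ∈ range R, ∑ n ∈ range R,
      (w m * Real.sin (m * θ)) * (if m = n then 0 else 1 / ((m : ℝ) - n)) *
        (w n * Real.cos (n * θ))
      = (inner ℝ y (A x) : ℝ) := hinner.symm
    _ ≤ ‖A‖ * (‖x‖ * ‖y‖) := hcs
    _ ≤ specNorm (Tmat R) * ((∑ n ∈ range R, (w n)^2) / 2) := by
        apply mul_le_mul_of_nonneg_left hxy (norm_nonneg A)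


lemma tail_est (ggf : ℝ → ℝ) (p : ℕ) (θ : ℝ) (hθ0 : 0 < θ) (hθπ : θ ≤ π) (hp : 1 ≤ p)
    (hcont : Continuous ggf)
    (hptw : ∀ t ∈ Set.Icc θ π, ggf t ≤ (π / t) ^ (2 * p)) :
    ∫ t in θ..π, ggf t ≤ π * (π/θ)^(2*p-1) / ((2*p-1 : ℕ) : ℝ) := by
  set k : ℕ := 2*p - 1 with hkdef
  have hθπ' : (0:ℝ) ∉ Set.uIcc θ π := by
    rw [Set.uIcc_of_le hθπ]
    intro h
    exact absurd h.1 (by linarith)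
  have h1 : ∫ t in θ..π, ggf t ≤ ∫ t in θ..π, (π/t)^(2*p) := by
    apply intervalIntegral.integral_mono_on hθπ
    · exact hcont.intervalIntegrable _ _
    · apply ContinuousOn.intervalIntegrable
      apply ContinuousOn.pow
      apply ContinuousOn.div continuousOn_const continuousOn_id
      intro t ht h
      exact hθπ' (h ▸ ht)
    · exact hptw
  have h2 : ∫ t in θ..π, (π/t)^(2*p) = π^(2*p) * ∫ t in θ..π, t^(-(2*p:ℤ)) := by
    rw [← intervalIntegral.integral_const_mul]
    apply intervalIntegral.integral_congr
    intro t ht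
    have ht0 : t ≠ 0 := fun h => hθπ' (h ▸ ht)
    show (π/t)^(2*p) = π^(2*p) * t^(-(2*p:ℤ))
    rw [div_pow, show (2*(p:ℤ)) = ((2*p : ℕ) : ℤ) by push_cast; ring, zpow_neg, zpow_natCast]
    field_simp
  have h3 : ∫ t in θ..π, t^(-(2*p:ℤ)) = (π^(-(2*p:ℤ)+1) - θ^(-(2*p:ℤ)+1)) / ((-(2*p:ℤ)+1 : ℤ) : ℝ) := by
    rw [integral_zpow (Or.inr ⟨by omega, hθπ'⟩)]
    norm_num
  have hk : -(2*(p:ℤ)) + 1 = -(k:ℤ) := by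
    have : (k:ℤ) = 2*(p:ℤ) - 1 := by
      rw [hkdef]; push_cast [Nat.cast_sub (by omega : 1 ≤ 2*p)]; ring
    omega
  have hπpos := Real.pi_pos
  have hb : (0:ℝ) < θ^k := by positivity
  have ha : (0:ℝ) < π^k := by positivity
  have hkpos : (0:ℝ) < (k:ℝ) := by
    have : 1 ≤ k := by omega
    exact_mod_cast Nat.lt_of_lt_of_le Nat.zero_lt_one this
  have e1 : (π:ℝ)^(-(2*p:ℤ)+1) = (π^k)⁻¹ := by
    rw [show -(2*(p:ℤ))+1 = -(k:ℤ) from hk, zpow_neg, zpow_natCast]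
  have e2 : (θ:ℝ)^(-(2*p:ℤ)+1) = (θ^k)⁻¹ := by
    rw [show -(2*(p:ℤ))+1 = -(k:ℤ) from hk, zpow_neg, zpow_natCast]
  have e3 : ((-(2*p:ℤ)+1 : ℤ) : ℝ) = -(k:ℝ) := by
    rw [hk]; push_cast; ring
  have e4 : π^(2*p) * (θ^k)⁻¹ = π * (π/θ)^k := by
    rw [div_pow, show 2*p = k+1 by omega, pow_succ]
    field_simp
  calc ∫ t in θ..π, ggf t ≤ π^(2*p) * ((π^(-(2*p:ℤ)+1) - θ^(-(2*p:ℤ)+1)) / ((-(2*p:ℤ)+1 : ℤ) : ℝ)) := by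
        rw [← h3, ← h2]; exact h1
    _ = π^(2*p) * (((θ^k)⁻¹ - (π^k)⁻¹) / (k:ℝ)) := by
        rw [e1, e2, e3]
        rw [div_neg, ← neg_div, neg_sub]
    _ ≤ π^(2*p) * ((θ^k)⁻¹ / (k:ℝ)) := by
        apply mul_le_mul_of_nonneg_left _ (by positivity)
        gcongr
        exact sub_le_self _ (by positivity)
    _ = π * (π/θ)^k / k := by
        rw [← e4]; ring


lemma main_estimate (R L p : ℕ) (hp : 1 ≤ p) (hL : 1 ≤ L) (hdeg : p * (L - 1) < R)
    {θ : ℝ} (hθ0 : 0 < θ) (hθπ : θ ≤ π) :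
    π - specNorm (Tmat R) ≤
      θ + (π * p / ((2*p-1 : ℕ) : ℝ)) * (π / (θ * L)) ^ (2*p-1) := by
  have hπpos := Real.pi_pos
  set w : ℕ → ℝ := hw L p with hwdef
  set c : ℝ := ∑ n ∈ range R, (w n)^2 with hcdef
  set s : ℝ := specNorm (Tmat R) with hsdef
  set k : ℕ := 2*p - 1 with hkdef
  have hkpos : (0:ℝ) < (k:ℝ) := by
    have : 1 ≤ k := by omega
    exact_mod_cast Nat.lt_of_lt_of_le Nat.zero_lt_one this
  have hLpos : (0:ℝ) < (L:ℝ) := by exact_mod_cast hL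
  have hppos : (0:ℝ) < (p:ℝ) := by exact_mod_cast hp
  -- the inner-product bound
  have hA : (∫ t in (0:ℝ)..θ, gg w R t) - θ * c ≤ s * c := by
    have h1 := D_id w R θ
    have h2 := spec_bound R w θ
    rw [h1] at h2
    rw [hcdef, hsdef]
    linarith
  -- splitting the integral
  have hsplit : (∫ t in (0:ℝ)..θ, gg w R t) + (∫ t in θ..π, gg w R t) = π * c := by
    rw [intervalIntegral.integral_add_adjacent_intervals
      ((gg_cont w R).intervalIntegrable _ _) ((gg_cont w R).intervalIntegrable _ _)]
    exact gg_half w R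
  -- tail bound
  have htail : ∫ t in θ..π, gg w R t ≤ π * (π/θ)^k / (k:ℝ) := by
    apply tail_est (gg w R) p θ hθ0 hθπ hp (gg_cont w R)
    intro t ht
    have := gg_pointwise R L p hp hL hdeg (lt_of_lt_of_le hθ0 ht.1) ht.2
    rw [gg]
    exact this
  -- c lower bound
  have hcl : (L:ℝ)^(2*p) ≤ c * ((p:ℝ) * L) := hc_lower R L p hp hL hdeg
  have hcpos : 0 < c := by
    have hL2 : (0:ℝ) < (L:ℝ)^(2*p) := by positivity
    nlinarith [mul_pos hppos hLpos]
  -- key chain: (π - θ - s) * c ≤ Tb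
  have hkey : (π - θ - s) * c ≤ π * (π/θ)^k / (k:ℝ) := by
    have : (∫ t in (0:ℝ)..θ, gg w R t) = π * c - ∫ t in θ..π, gg w R t := by
      linarith
    nlinarith [hA, htail]
  -- Tb * (p*L) = B * L^(2p)
  set B : ℝ := (π * p / ((2*p-1 : ℕ) : ℝ)) * (π / (θ * L)) ^ (2*p-1) with hBdef
  have hBnn : 0 ≤ B := by
    rw [hBdef]
    positivity
  have hTbB : (π * (π/θ)^k / (k:ℝ)) * ((p:ℝ) * L) = B * (L:ℝ)^(2*p) := by
    rw [hBdef, ← hkdef, show 2*p = k + 1 by omega, div_pow, div_pow, pow_succ]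
    rw [mul_pow]
    field_simp
  -- conclude
  rcases le_or_gt (π - θ - s) 0 with hneg | hpos
  · nlinarith
  · have step : (π - θ - s) * (L:ℝ)^(2*p) ≤ B * (L:ℝ)^(2*p) := by
      calc (π - θ - s) * (L:ℝ)^(2*p) ≤ (π - θ - s) * (c * ((p:ℝ) * L)) := by
            apply mul_le_mul_of_nonneg_left hcl hpos.le
        _ = ((π - θ - s) * c) * ((p:ℝ) * L) := by ring
        _ ≤ (π * (π/θ)^k / (k:ℝ)) * ((p:ℝ) * L) := by
            apply mul_le_mul_of_nonneg_right hkey (by positivity)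
        _ = B * (L:ℝ)^(2*p) := hTbB
    have hLp : (0:ℝ) < (L:ℝ)^(2*p) := by positivity
    have := le_of_mul_le_mul_right (by linarith [step] : (π - θ - s) * (L:ℝ)^(2*p) ≤ B * (L:ℝ)^(2*p)) hLp
    linarith

end HilbAux

/-- For every `R ≥ 3`, `π - ‖T_R‖ ≤ (π e log R)/R + (2π e³)/R`; in particular
there is a constant `b > 0` with `π - ‖T_R‖ ≤ b (log R)/R` for all `R ≥ 2`. -/
theorem pi_sub_specNorm_upper_bound :
    (∀ R : ℕ, 3 ≤ R →
      Real.pi - specNorm (Tmat R) ≤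
        Real.pi * Real.exp 1 * Real.log R / R +
          2 * Real.pi * Real.exp 1 ^ 3 / R) ∧
    ∃ b > (0 : ℝ), ∀ R : ℕ, 2 ≤ R →
      Real.pi - specNorm (Tmat R) ≤ b * Real.log R / R := by
  have hπpos := Real.pi_pos
  have hE1 : (1:ℝ) < Real.exp 1 := by
    have := Real.exp_one_gt_d9
    linarith
  have hEpos : (0:ℝ) < Real.exp 1 := by linarith
  have part1 : ∀ R : ℕ, 3 ≤ R →
      Real.pi - specNorm (Tmat R) ≤
        Real.pi * Real.exp 1 * Real.log R / R + 2 * Real.pi * Real.exp 1 ^ 3 / R := by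
    intro R hR3
    set E := Real.exp 1 with hEdef
    set lR := Real.log R with hlRdef
    have hRpos : (0:ℝ) < R := by
      have : (3:ℝ) ≤ R := by exact_mod_cast hR3
      linarith
    have hsnn : 0 ≤ specNorm (Tmat R) := norm_nonneg _
    have hlRpos : 0 < lR := by
      rw [hlRdef]
      apply Real.log_pos
      have : (3:ℝ) ≤ R := by exact_mod_cast hR3
      linarith
    rcases le_or_gt (R:ℝ) (E * lR + 2 * E^3) with hcase | hcase
    · -- trivial regime
      have h1 : Real.pi ≤ Real.pi * E * lR / R + 2 * Real.pi * E^3 / R := by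
        rw [← add_div, le_div_iff₀ hRpos]
        nlinarith
      linarith
    · -- main regime
      have hElR : E * lR < (R:ℝ) := by nlinarith [pow_pos hEpos 3]
      have hR2e : Real.exp 2 < (R:ℝ) := by
        have he2 : Real.exp 2 = E * E := by
          rw [show (2:ℝ) = 1 + 1 by norm_num, Real.exp_add, hEdef]
        rw [he2]
        nlinarith [pow_pos hEpos 3, sq_nonneg (E - 1), pow_pos hEpos 2]
      have hlR2 : 2 < lR := by
        rw [hlRdef]
        exact (Real.lt_log_iff_exp_lt hRpos).mpr hR2e
      set p : ℕ := ⌈lR/2⌉₊ - 1 with hpdef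
      set L : ℕ := ⌊(R:ℝ)/lR⌋₊ + 1 with hLdef
      have hceil2 : 2 ≤ ⌈lR/2⌉₊ := by
        have : 1 < ⌈lR/2⌉₊ := by
          rw [Nat.lt_ceil]
          push_cast
          linarith
        omega
      have hp1 : 1 ≤ p := by omega
      have hpcast : (p:ℝ) = (⌈lR/2⌉₊ : ℝ) - 1 := by
        rw [hpdef]
        push_cast [Nat.cast_sub (by omega : 1 ≤ ⌈lR/2⌉₊)]
        ring
      have hpup : (p:ℝ) < lR/2 := by
        have := Nat.ceil_lt_add_one (by positivity : (0:ℝ) ≤ lR/2)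
        rw [hpcast]
        linarith
      have hplow : lR/2 - 1 ≤ (p:ℝ) := by
        have := Nat.le_ceil (lR/2)
        rw [hpcast]
        linarith
      have hL1 : 1 ≤ L := by omega
      have hLlow : (R:ℝ)/lR ≤ (L:ℝ) := by
        have := Nat.lt_floor_add_one ((R:ℝ)/lR)
        rw [hLdef]
        push_cast
        linarith
      have hLup : ((L - 1 : ℕ) : ℝ) ≤ (R:ℝ)/lR := by
        have h := Nat.floor_le (by positivity : (0:ℝ) ≤ (R:ℝ)/lR)
        rw [hLdef]
        push_cast
        linarith
      have hLpos : (0:ℝ) < (L:ℝ) := by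
        exact_mod_cast hL1
      have hRlR : (0:ℝ) < (R:ℝ)/lR := by positivity
      have hdeg : p * (L - 1) < R := by
        have hcast : ((p * (L-1) : ℕ) : ℝ) < (R:ℝ) := by
          push_cast
          calc (p:ℝ) * ((L-1:ℕ):ℝ) ≤ (p:ℝ) * ((R:ℝ)/lR) := by
                apply mul_le_mul_of_nonneg_left hLup (by positivity)
            _ < (lR/2) * ((R:ℝ)/lR) := by
                apply mul_lt_mul_of_pos_right hpup hRlR
            _ = (R:ℝ)/2 := by field_simp
            _ < R := by linarith
        exact_mod_cast hcast
      set θ : ℝ := Real.pi * E / L with hθdef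
      have hθ0 : 0 < θ := by rw [hθdef]; positivity
      have hEL : E < (L:ℝ) := by
        calc E < (R:ℝ)/lR := by rw [lt_div_iff₀ hlRpos]; linarith
          _ ≤ L := hLlow
      have hθπ : θ ≤ Real.pi := by
        rw [hθdef, div_le_iff₀ hLpos]
        nlinarith
      have hmain := main_estimate R L p hp1 hL1 hdeg hθ0 hθπ
      set k : ℕ := 2*p - 1 with hkdef
      have hk1 : 1 ≤ k := by omega
      have hkpos : (0:ℝ) < (k:ℝ) := by exact_mod_cast hk1
      have hkcast : (k:ℝ) = 2*(p:ℝ) - 1 := by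
        rw [hkdef]
        push_cast [Nat.cast_sub (by omega : 1 ≤ 2*p)]
        ring
      -- first term
      have hterm1 : θ ≤ Real.pi * E * lR / R := by
        rw [hθdef, div_le_div_iff₀ hLpos hRpos]
        have hRL : (R:ℝ) ≤ (L:ℝ) * lR := (div_le_iff₀ hlRpos).mp hLlow
        nlinarith [mul_le_mul_of_nonneg_left hRL (by positivity : (0:ℝ) ≤ Real.pi * E)]
      -- second term
      have hθL : Real.pi / (θ * L) = 1/E := by
        rw [hθdef]
        field_simp
      have hterm2 : (Real.pi * p / (k:ℝ)) * (Real.pi / (θ * L))^k ≤ 2 * Real.pi * E^3 / R := by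
        rw [hθL]
        have hfrac : Real.pi * p / (k:ℝ) ≤ Real.pi := by
          rw [div_le_iff₀ hkpos]
          have : (p:ℝ) ≤ (k:ℝ) := by rw [hkcast]; push_cast; linarith [hp1, (by exact_mod_cast hp1 : (1:ℝ) ≤ (p:ℝ))]
          nlinarith
        have hexp : ((1:ℝ)/E)^k = Real.exp (-(k:ℝ)) := by
          rw [hEdef, one_div, ← Real.exp_neg, ← Real.exp_nat_mul]
          congr 1
          ring
        have hRexp : (R:ℝ) = Real.exp lR := (Real.exp_log hRpos).symm
        have hE3 : E^3 = Real.exp 3 := by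
          rw [hEdef, ← Real.exp_nat_mul]
          norm_num
        have hkey : Real.exp (-(k:ℝ)) ≤ 2 * Real.exp 3 / Real.exp lR := by
          rw [div_eq_mul_inv, ← Real.exp_neg]
          have h1 : Real.exp (-(k:ℝ)) ≤ Real.exp (3 + -lR) := by
            apply Real.exp_le_exp.mpr
            have : lR - 3 ≤ (k:ℝ) := by
              rw [hkcast]
              linarith
            linarith
          rw [Real.exp_add] at h1
          have h2 : 0 < Real.exp 3 * Real.exp (-lR) :=
            mul_pos (Real.exp_pos 3) (Real.exp_pos (-lR))
          calc Real.exp (-(k:ℝ)) ≤ Real.exp 3 * Real.exp (-lR) := h1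
            _ ≤ 2 * (Real.exp 3 * Real.exp (-lR)) := by linarith
            _ = 2 * Real.exp 3 * Real.exp (-lR) := by ring
        calc (Real.pi * p / (k:ℝ)) * ((1:ℝ)/E)^k ≤ Real.pi * ((1:ℝ)/E)^k := by
              apply mul_le_mul_of_nonneg_right hfrac (by positivity)
          _ = Real.pi * Real.exp (-(k:ℝ)) := by rw [hexp]
          _ ≤ Real.pi * (2 * Real.exp 3 / Real.exp lR) := by
              apply mul_le_mul_of_nonneg_left hkey (by positivity)
          _ = 2 * Real.pi * E^3 / R := by
              rw [hE3, hRexp]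
              ring
      calc Real.pi - specNorm (Tmat R)
          ≤ θ + (Real.pi * p / ((2*p-1:ℕ):ℝ)) * (Real.pi / (θ * L))^(2*p-1) := hmain
        _ ≤ Real.pi * E * lR / R + 2 * Real.pi * E^3 / R := by
            apply add_le_add hterm1
            exact hterm2
  refine ⟨part1, Real.pi * Real.exp 1 + 2 * Real.pi * Real.exp 1 ^ 3 / Real.log 2
      + 2 * Real.pi / Real.log 2, ?_, ?_⟩
  · have hl2 : 0 < Real.log 2 := Real.log_pos (by norm_num)
    positivity
  · intro R hR2
    have hl2 : 0 < Real.log 2 := Real.log_pos (by norm_num)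
    have hsnn : 0 ≤ specNorm (Tmat R) := norm_nonneg _
    rcases eq_or_lt_of_le hR2 with hR2' | hR3
    · -- R = 2
      subst hR2'
      have hcast2 : ((2:ℕ):ℝ) = (2:ℝ) := by norm_num
      rw [hcast2]
      have hexpand : (Real.pi * Real.exp 1 + 2 * Real.pi * Real.exp 1 ^ 3 / Real.log 2
            + 2 * Real.pi / Real.log 2) * Real.log 2 / 2
          = Real.pi * Real.exp 1 * Real.log 2 / 2 + Real.pi * Real.exp 1 ^ 3 + Real.pi := by
        field_simp
      rw [hexpand]
      nlinarith [hsnn, mul_pos (mul_pos hπpos hEpos) hl2, pow_pos hEpos 3,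
        mul_pos hπpos (pow_pos hEpos 3)]
    · -- R ≥ 3
      have hR3' : 3 ≤ R := hR3
      have h1 := part1 R hR3'
      have hRpos : (0:ℝ) < R := by
        have : (2:ℝ) ≤ R := by exact_mod_cast hR2
        linarith
      have hlR : Real.log 2 ≤ Real.log R := by
        apply Real.log_le_log (by norm_num)
        exact_mod_cast hR2
      calc Real.pi - specNorm (Tmat R)
          ≤ Real.pi * Real.exp 1 * Real.log R / R + 2 * Real.pi * Real.exp 1 ^ 3 / R := h1
        _ ≤ (Real.pi * Real.exp 1 + 2 * Real.pi * Real.exp 1 ^ 3 / Real.log 2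
              + 2 * Real.pi / Real.log 2) * Real.log R / R := by
            rw [← add_div]
            apply div_le_div_of_nonneg_right _ hRpos.le
            have hlRpos : 0 < Real.log R := lt_of_lt_of_le hl2 hlR
            have hq : (2 * Real.pi * Real.exp 1 ^ 3 / Real.log 2) * Real.log 2
                = 2 * Real.pi * Real.exp 1 ^ 3 := by
              field_simp
            have key : 2 * Real.pi * Real.exp 1 ^ 3
                ≤ (2 * Real.pi * Real.exp 1 ^ 3 / Real.log 2) * Real.log R := by
              calc 2 * Real.pi * Real.exp 1 ^ 3
                  = (2 * Real.pi * Real.exp 1 ^ 3 / Real.log 2) * Real.log 2 := hq.symm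
                _ ≤ (2 * Real.pi * Real.exp 1 ^ 3 / Real.log 2) * Real.log R := by
                    apply mul_le_mul_of_nonneg_left hlR (by positivity)
            have hthird : 0 ≤ (2 * Real.pi / Real.log 2) * Real.log R := by positivity
            nlinarith
end

section
/- Let M and N be positive integers, define g(x) = (Σ_{m=0}^{M−1} exp(imx))^N, and let 0 < c ≤ 2π. Then ∫_{c/2}^{2π−c/2} |g(x)|² dx ≤ (2π/(2N−1)) · (2π/c)^{2N−1}. -/
/-- The function `g(x) = (Σ_{m=0}^{M-1} e^{imx})^N`. -/
noncomputable def gfun (M N : ℕ) (t : ℝ) : ℂ :=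
  (∑ m ∈ Finset.range M, Complex.exp (Complex.I * (m : ℂ) * (t : ℂ))) ^ N

lemma exp_I_sub_one (x : ℝ) :
    Complex.exp (Complex.I * x) - 1 =
      Complex.exp (Complex.I * (x/2)) * (2 * Complex.I * Complex.sin ((x:ℂ)/2)) := by
  rw [Complex.sin,
    show ((x:ℂ)/2 * Complex.I) = Complex.I * ((x:ℂ)/2) by ring,
    show (-((x:ℂ)/2) * Complex.I) = -(Complex.I * ((x:ℂ)/2)) by ring,
    Complex.exp_neg,
    show (Complex.I * (x:ℂ)) = Complex.I*((x:ℂ)/2) + Complex.I*((x:ℂ)/2) by ring,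
    Complex.exp_add]
  have ha : Complex.exp (Complex.I * ((x:ℂ)/2)) ≠ 0 := Complex.exp_ne_zero _
  field_simp
  ring_nf
  simp [Complex.I_sq]

lemma abs_exp_I_sub_one (x : ℝ) :
    ‖Complex.exp (Complex.I * x) - 1‖ = 2 * |Real.sin (x/2)| := by
  rw [exp_I_sub_one, norm_mul, norm_mul, norm_mul]
  have h : ((x:ℂ)/2) = ((x/2 : ℝ) : ℂ) := by push_cast; ring
  rw [h, ← Complex.ofReal_sin, Complex.norm_real]
  simp [Complex.norm_exp]

lemma sum_exp_bound (M : ℕ) (x : ℝ) (hs : Real.sin (x/2) ≠ 0) :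
    ‖∑ m ∈ Finset.range M, Complex.exp (Complex.I * (m : ℂ) * (x : ℂ))‖
      ≤ |Real.sin (x/2)|⁻¹ := by
  have habs : ‖Complex.exp (Complex.I * x) - 1‖ = 2 * |Real.sin (x/2)| :=
    abs_exp_I_sub_one x
  have hne : Complex.exp (Complex.I * x) ≠ 1 := by
    intro h
    rw [h] at habs
    simp at habs
    exact hs habs
  have hsum : (∑ m ∈ Finset.range M, Complex.exp (Complex.I * (m : ℂ) * (x : ℂ)))
      = (Complex.exp (Complex.I * x) ^ M - 1) / (Complex.exp (Complex.I * x) - 1) := by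
    rw [← geom_sum_eq hne]
    refine Finset.sum_congr rfl fun m _ => ?_
    rw [← Complex.exp_nat_mul]
    ring_nf
  rw [hsum, norm_div, habs]
  rw [div_le_iff₀ (by positivity)]
  calc ‖Complex.exp (Complex.I * x) ^ M - 1‖
      ≤ ‖Complex.exp (Complex.I * x) ^ M‖ + ‖(1:ℂ)‖ :=
        norm_sub_le _ _
    _ ≤ 2 := by
        rw [norm_pow]
        have h1 : ‖Complex.exp (Complex.I * x)‖ = 1 := by
          simp [Complex.norm_exp]
        rw [h1]
        norm_num
    _ ≤ |Real.sin (x/2)|⁻¹ * (2 * |Real.sin (x/2)|) := by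
        have h0 : 0 < |Real.sin (x/2)| := abs_pos.mpr hs
        rw [show |Real.sin (x/2)|⁻¹ * (2 * |Real.sin (x/2)|) = 2 * (|Real.sin (x/2)|⁻¹ * |Real.sin (x/2)|) by ring, inv_mul_cancel₀ h0.ne']
        norm_num

open Real in
lemma pointwise_bound (M N : ℕ) (x : ℝ) (hx1 : 0 < x) (hx2 : x < 2*π) :
    ‖gfun M N x‖^2 ≤
      π^(2*N) * ((x ^ (2*N))⁻¹ + ((2*π - x)^(2*N))⁻¹) := by
  have hπ : 0 < π := Real.pi_pos
  have hs0 : 0 < Real.sin (x/2) := Real.sin_pos_of_pos_of_lt_pi (by linarith) (by linarith)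
  have hS : ‖∑ m ∈ Finset.range M, Complex.exp (Complex.I * (m : ℂ) * (x : ℂ))‖
      ≤ (Real.sin (x/2))⁻¹ := by
    have := sum_exp_bound M x hs0.ne'
    rwa [abs_of_pos hs0] at this
  have hkey : ‖gfun M N x‖^2
      ≤ ((Real.sin (x/2))⁻¹) ^ (2*N) := by
    rw [gfun, norm_pow, ← pow_mul, Nat.mul_comm]
    exact pow_le_pow_left₀ (norm_nonneg _) hS _
  rcases le_or_gt x π with hxπ | hxπ
  · have h1 : x/π ≤ Real.sin (x/2) := by
      have := Real.mul_le_sin (x := x/2) (by linarith) (by linarith)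
      calc x/π = 2/π * (x/2) := by field_simp
        _ ≤ _ := this
    have h2 : ((Real.sin (x/2))⁻¹) ^ (2*N) ≤ (π/x) ^ (2*N) := by
      apply pow_le_pow_left₀ (by positivity)
      rw [inv_le_comm₀ hs0 (by positivity)]
      calc (π/x)⁻¹ = x/π := by field_simp
        _ ≤ _ := h1
    have h3 : (π/x : ℝ) ^ (2*N) = π^(2*N) * (x ^ (2*N))⁻¹ := by
      rw [div_pow]; ring
    have h4 : (0:ℝ) ≤ π^(2*N) * ((2*π - x)^(2*N))⁻¹ := by
      have : (0:ℝ) < 2*π - x := by linarith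
      positivity
    calc ‖gfun M N x‖^2 ≤ _ := hkey
      _ ≤ (π/x) ^ (2*N) := h2
      _ = π^(2*N) * (x ^ (2*N))⁻¹ := h3
      _ ≤ _ := by nlinarith [h4]
  · have hsin : Real.sin (x/2) = Real.sin ((2*π - x)/2) := by
      rw [show (2*π - x)/2 = π - x/2 by ring, Real.sin_pi_sub]
    have h1 : (2*π - x)/π ≤ Real.sin (x/2) := by
      rw [hsin]
      have := Real.mul_le_sin (x := (2*π-x)/2) (by linarith) (by linarith)
      calc (2*π-x)/π = 2/π * ((2*π-x)/2) := by field_simp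
        _ ≤ _ := this
    have h2 : ((Real.sin (x/2))⁻¹) ^ (2*N) ≤ (π/(2*π-x)) ^ (2*N) := by
      apply pow_le_pow_left₀ (by positivity)
      rw [inv_le_comm₀ hs0 (div_pos hπ (by linarith))]
      calc (π/(2*π-x))⁻¹ = (2*π-x)/π := by rw [inv_div]
        _ ≤ _ := h1
    have h3 : (π/(2*π-x) : ℝ) ^ (2*N) = π^(2*N) * ((2*π-x) ^ (2*N))⁻¹ := by
      rw [div_pow]; ring
    have h4 : (0:ℝ) ≤ π^(2*N) * (x^(2*N))⁻¹ := by positivity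
    calc ‖gfun M N x‖^2 ≤ _ := hkey
      _ ≤ (π/(2*π-x)) ^ (2*N) := h2
      _ = π^(2*N) * ((2*π-x) ^ (2*N))⁻¹ := h3
      _ ≤ _ := by nlinarith [h4]


open Real

/-- For `0 < c ≤ 2π`,
`∫_{c/2}^{2π - c/2} |g(x)|² dx ≤ (2π/(2N-1)) (2π/c)^{2N-1}`. -/
theorem integral_tail_sq_norm_g_bound (M N : ℕ) (hM : 0 < M) (hN : 0 < N)
    (c : ℝ) (hc : 0 < c) (hc2 : c ≤ 2 * Real.pi) :
    (∫ t in (c / 2)..(2 * Real.pi - c / 2), ‖gfun M N t‖ ^ 2) ≤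
      (2 * Real.pi / (2 * (N : ℝ) - 1)) * (2 * Real.pi / c) ^ (2 * N - 1) := by
  have hπ : 0 < π := Real.pi_pos
  set a := c / 2 with ha_def
  set b := 2 * π - c / 2 with hb_def
  have ha : 0 < a := by positivity
  have hab : a ≤ b := by rw [ha_def, hb_def]; linarith
  have hb2π : b < 2 * π := by rw [hb_def]; linarith
  have h0mem : (0:ℝ) ∉ Set.uIcc a b := by
    rw [Set.uIcc_of_le hab]
    intro h
    exact absurd h.1 (by linarith)
  set n : ℤ := -(2*N : ℤ) with hn_def
  -- integrability of |g|^2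
  have hgcont : Continuous fun t : ℝ => ‖gfun M N t‖ ^ 2 := by
    apply Continuous.pow
    apply continuous_norm.comp
    unfold gfun
    apply Continuous.pow
    exact continuous_finset_sum _ fun m _ =>
      Complex.continuous_exp.comp (continuous_const.mul Complex.continuous_ofReal)
  have hInt1 : IntervalIntegrable (fun x : ℝ => x ^ n) MeasureTheory.volume a b :=
    intervalIntegral.intervalIntegrable_zpow (Or.inr h0mem)
  have hInt2 : IntervalIntegrable (fun x : ℝ => (2*π - x) ^ n) MeasureTheory.volume a b := by
    have := hInt1.comp_sub_left (2*π)
    have he1 : 2*π - a = b := by rw [ha_def, hb_def]; try ring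
    have he2 : 2*π - b = a := by rw [ha_def, hb_def]; try ring
    rw [he1, he2] at this
    exact this.symm
  have hInth : IntervalIntegrable (fun x : ℝ => π^(2*N) * (x ^ n + (2*π - x) ^ n))
      MeasureTheory.volume a b := ((hInt1.add hInt2).const_mul _)
  -- pointwise bound on [a, b]
  have hpt : ∀ x ∈ Set.Icc a b, ‖gfun M N x‖ ^ 2 ≤
      π^(2*N) * (x ^ n + (2*π - x) ^ n) := by
    intro x hx
    have hx1 : 0 < x := lt_of_lt_of_le ha hx.1
    have hx2 : x < 2*π := lt_of_le_of_lt hx.2 hb2π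
    have := pointwise_bound M N x hx1 hx2
    have e1 : (x:ℝ) ^ n = (x ^ (2*N))⁻¹ := by
      rw [hn_def, zpow_neg]; norm_cast
    have e2 : (2*π - x) ^ n = ((2*π - x) ^ (2*N))⁻¹ := by
      rw [hn_def, zpow_neg]; norm_cast
    rw [e1, e2]
    exact this
  have hmono := intervalIntegral.integral_mono_on hab (hgcont.intervalIntegrable a b) hInth hpt
  refine hmono.trans ?_
  -- compute the integral of the bound
  have hI1 : (∫ x in a..b, x ^ n) = (b ^ (n + 1) - a ^ (n + 1)) / ((n : ℝ) + 1) := by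
    apply integral_zpow
    exact Or.inr ⟨by omega, h0mem⟩
  have hI2 : (∫ x in a..b, (2*π - x) ^ n) = ∫ x in a..b, x ^ n := by
    rw [intervalIntegral.integral_comp_sub_left (fun x : ℝ => x ^ n) (2*π)]
    have he1 : 2*π - a = b := by rw [ha_def, hb_def]; try ring
    have he2 : 2*π - b = a := by rw [ha_def, hb_def]; try ring
    rw [he1, he2]
  rw [intervalIntegral.integral_const_mul, intervalIntegral.integral_add hInt1 hInt2, hI2, hI1]
  -- now pure algebra
  set k := 2 * N - 1 with hk_def
  have hk : 2 * N = k + 1 := by omega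
  have hk1 : 1 ≤ k := by omega
  have hkR : (0:ℝ) < (k:ℝ) := by exact_mod_cast Nat.pos_of_ne_zero (by omega)
  have hn1 : n + 1 = -(k : ℤ) := by rw [hn_def]; omega
  have hbk : (b:ℝ) ^ (n+1) = (b ^ k)⁻¹ := by rw [hn1, zpow_neg]; norm_cast
  have hak : (a:ℝ) ^ (n+1) = (a ^ k)⁻¹ := by rw [hn1, zpow_neg]; norm_cast
  have hncast : ((n:ℝ) + 1) = -(k:ℝ) := by
    have h := congrArg (fun z : ℤ => (z:ℝ)) hn1
    push_cast at h
    linarith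
  rw [hbk, hak, hncast]
  have hbknn : (0:ℝ) ≤ (b ^ k)⁻¹ := by
    have : 0 < b := lt_of_lt_of_le ha hab
    positivity
  have hNk : (2 * (N : ℝ) - 1) = (k : ℝ) := by
    have h := congrArg (fun m : ℕ => (m:ℝ)) hk
    push_cast at h
    linarith
  rw [hNk]
  have step1 : ((b ^ k)⁻¹ - (a ^ k)⁻¹) / (-(k:ℝ)) ≤ (a ^ k)⁻¹ / (k:ℝ) := by
    rw [div_neg, ← neg_div, neg_sub]
    have hle : (a ^ k)⁻¹ - (b ^ k)⁻¹ ≤ (a ^ k)⁻¹ := by linarith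
    gcongr
  calc π ^ (2 * N) * (((b ^ k)⁻¹ - (a ^ k)⁻¹) / -(k:ℝ) + ((b ^ k)⁻¹ - (a ^ k)⁻¹) / -(k:ℝ))
      ≤ π ^ (2 * N) * ((a ^ k)⁻¹ / (k:ℝ) + (a ^ k)⁻¹ / (k:ℝ)) := by
        apply mul_le_mul_of_nonneg_left (by linarith [step1]) (pow_nonneg hπ.le _)
    _ = 2 * π / (k:ℝ) * (2 * π / c) ^ k := by
        rw [hk, pow_succ]
        have hck : (2 * π / c) ^ k = π ^ k * ((c/2) ^ k)⁻¹ := by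
          rw [div_pow, div_pow, mul_pow]
          field_simp
        rw [hck, ha_def]
        field_simp
        ring
end
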